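/- For n ≥ 2, the tensor Ψ : (Fin n)⁴ → ℂ defined by Ψ a b c d = δ_{ad} · δ_{bc} is doubly dilated but not doubly mixed. In particular, for n ≥ 2 the set of doubly mixed tensors is a proper subset of the set of doubly dilated tensors. -/

import Mathlib

open scoped ComplexOrder

def DoublyMixed (n : ℕ) (Ψ : Fin n → Fin n → Fin n → Fin n → ℂ) : Prop :=
  ∃ (N : ℕ) (r : Fin N → ℝ) (ρ : Fin N → Matrix (Fin n) (Fin n) ℂ),
    (∀ k, 0 ≤ r k) ∧ (∀ k, (ρ k).PosSemidef) ∧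
    ∀ a b c d, Ψ a b c d = ∑ k, (r k : ℂ) * ρ k a b * ρ k c d

def DoublyDilated (n : ℕ) (Ψ : Fin n → Fin n → Fin n → Fin n → ℂ) : Prop :=
  ∃ (m p : ℕ) (φ : Fin n → Fin m → Fin p → ℂ),
    ∀ a b c d, Ψ a b c d =
      ∑ i, ∑ j, ∑ k, ∑ l,
        φ a i k * (starRingEnd ℂ) (φ b i l) * φ c j l * (starRingEnd ℂ) (φ d j k)

open scoped MatrixOrder in
theorem mixed_imp_dilated {n : ℕ} {Ψ : Fin n → Fin n → Fin n → Fin n → ℂ}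
    (h : DoublyMixed n Ψ) : DoublyDilated n Ψ := by
  obtain ⟨N, r, ρ, hr, hρ, hrep⟩ := h
  set S : Fin N → Matrix (Fin n) (Fin n) ℂ := fun k => CFC.sqrt (ρ k) with hS
  have hSh : ∀ k, (S k).IsHermitian := fun k => (Matrix.nonneg_iff_posSemidef.mp (CFC.sqrt_nonneg (ρ k))).1
  have hkey : ∀ k a b, (∑ x, S k a x * S k x b) = ρ k a b := by
    intro k a b
    calc (∑ x, S k a x * S k x b) = (S k * S k) a b := (Matrix.mul_apply).symm
      _ = ρ k a b := by rw [hS, CFC.sqrt_mul_sqrt_self (ρ k) (hρ k).nonneg]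
  set u : Fin N → ℂ := fun k => (Real.sqrt (Real.sqrt (r k)) : ℂ) with hu
  have hu4 : ∀ k, u k * u k * (u k * u k) = (r k : ℂ) := by
    intro k
    show ((Real.sqrt (Real.sqrt (r k)) : ℝ) : ℂ) * ((Real.sqrt (Real.sqrt (r k)) : ℝ) : ℂ) *
      (((Real.sqrt (Real.sqrt (r k)) : ℝ) : ℂ) * ((Real.sqrt (Real.sqrt (r k)) : ℝ) : ℂ)) = ((r k : ℝ) : ℂ)
    norm_cast
    rw [Real.mul_self_sqrt (Real.sqrt_nonneg _), Real.mul_self_sqrt (hr k)]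
  have hcu : ∀ k, (starRingEnd ℂ) (u k) = u k := fun k => Complex.conj_ofReal _
  set e := finProdFinEquiv (m := N) (n := n) with he
  refine ⟨N * n, N, fun a i k =>
      if (e.symm i).1 = k then u (e.symm i).1 * S (e.symm i).1 a (e.symm i).2 else 0, ?_⟩
  intro a b c d
  rw [hrep a b c d]
  symm
  have inner : ∀ (i₁ j₁ : Fin N) (x y : Fin n),
      (∑ k, ∑ l, (if i₁ = k then u i₁ * S i₁ a x else 0) *
        (starRingEnd ℂ) (if i₁ = l then u i₁ * S i₁ b x else 0) *
        (if j₁ = l then u j₁ * S j₁ c y else 0) *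
        (starRingEnd ℂ) (if j₁ = k then u j₁ * S j₁ d y else 0)) =
      if i₁ = j₁ then (u i₁ * S i₁ a x) * (u i₁ * S i₁ x b) *
        ((u i₁ * S i₁ c y) * (u i₁ * S i₁ y d)) else 0 := by
    intro i₁ j₁ x y
    rw [Finset.sum_comm]
    rw [Finset.sum_eq_single i₁ (by intro l _ hl; simp [Ne.symm hl])
      (by intro hl; simp at hl)]
    rw [Finset.sum_eq_single j₁ (by intro k _ hk; simp [Ne.symm hk])
      (by intro hk; simp at hk)]
    by_cases hij : i₁ = j₁
    · subst hij
      have hsu : ∀ k, star (u k) = u k := hcu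
      simp only [if_pos rfl, if_true, eq_self_iff_true, starRingEnd_apply, star_mul',
        star_star, hsu, (hSh i₁).apply]
      ring
    · simp [hij, Ne.symm hij]
  have collapse : ∀ (H : Fin n → ℂ) (i₁ : Fin N),
      (∑ q' : Fin N × Fin n, if i₁ = q'.1 then H q'.2 else 0) = ∑ y, H y := by
    intro H i₁
    rw [Fintype.sum_prod_type]
    rw [Finset.sum_eq_single i₁ (by intro j₁ _ hj; simp [Ne.symm hj])
      (by intro hj; simp at hj)]
    simp
  calc (∑ i, ∑ j, ∑ k, ∑ l,
        (fun a i k => if (e.symm i).1 = k then u (e.symm i).1 * S (e.symm i).1 a (e.symm i).2 else 0) a i k *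
        (starRingEnd ℂ) ((fun a i k => if (e.symm i).1 = k then u (e.symm i).1 * S (e.symm i).1 a (e.symm i).2 else 0) b i l) *
        (fun a i k => if (e.symm i).1 = k then u (e.symm i).1 * S (e.symm i).1 a (e.symm i).2 else 0) c j l *
        (starRingEnd ℂ) ((fun a i k => if (e.symm i).1 = k then u (e.symm i).1 * S (e.symm i).1 a (e.symm i).2 else 0) d j k))
      = ∑ q : Fin N × Fin n, ∑ q' : Fin N × Fin n, ∑ k, ∑ l,
          (if q.1 = k then u q.1 * S q.1 a q.2 else 0) *
          (starRingEnd ℂ) (if q.1 = l then u q.1 * S q.1 b q.2 else 0) *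
          (if q'.1 = l then u q'.1 * S q'.1 c q'.2 else 0) *
          (starRingEnd ℂ) (if q'.1 = k then u q'.1 * S q'.1 d q'.2 else 0) := by
        rw [← Equiv.sum_comp e]
        refine Finset.sum_congr rfl fun q _ => ?_
        rw [← Equiv.sum_comp e]
        simp only [Equiv.symm_apply_apply]
    _ = ∑ q : Fin N × Fin n, ∑ q' : Fin N × Fin n,
          if q.1 = q'.1 then (u q.1 * S q.1 a q.2) * (u q.1 * S q.1 q.2 b) *
            ((u q.1 * S q.1 c q'.2) * (u q.1 * S q.1 q'.2 d)) else 0 := by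
        exact Finset.sum_congr rfl fun q _ => Finset.sum_congr rfl fun q' _ =>
          inner q.1 q'.1 q.2 q'.2
    _ = ∑ q : Fin N × Fin n, ∑ y,
          (u q.1 * S q.1 a q.2) * (u q.1 * S q.1 q.2 b) *
            ((u q.1 * S q.1 c y) * (u q.1 * S q.1 y d)) := by
        exact Finset.sum_congr rfl fun q _ => collapse
          (fun y => (u q.1 * S q.1 a q.2) * (u q.1 * S q.1 q.2 b) *
            ((u q.1 * S q.1 c y) * (u q.1 * S q.1 y d))) q.1
    _ = ∑ i₁ : Fin N, ∑ x, ∑ y,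
          (u i₁ * S i₁ a x) * (u i₁ * S i₁ x b) *
            ((u i₁ * S i₁ c y) * (u i₁ * S i₁ y d)) := by
        rw [Fintype.sum_prod_type]
    _ = ∑ k, (r k : ℂ) * ρ k a b * ρ k c d := by
        refine Finset.sum_congr rfl fun i₁ _ => ?_
        have hxy : ∀ x y : Fin n, (u i₁ * S i₁ a x) * (u i₁ * S i₁ x b) *
            ((u i₁ * S i₁ c y) * (u i₁ * S i₁ y d)) =
            (r i₁ : ℂ) * ((S i₁ a x * S i₁ x b) * (S i₁ c y * S i₁ y d)) := by
          intro x y; rw [← hu4 i₁]; ring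
        calc (∑ x, ∑ y, (u i₁ * S i₁ a x) * (u i₁ * S i₁ x b) *
              ((u i₁ * S i₁ c y) * (u i₁ * S i₁ y d)))
            = (r i₁ : ℂ) * ∑ x, ∑ y, (S i₁ a x * S i₁ x b) * (S i₁ c y * S i₁ y d) := by
              rw [Finset.mul_sum]
              exact Finset.sum_congr rfl fun x _ => by
                rw [Finset.mul_sum]; exact Finset.sum_congr rfl fun y _ => hxy x y
          _ = (r i₁ : ℂ) * ((∑ x, S i₁ a x * S i₁ x b) * (∑ y, S i₁ c y * S i₁ y d)) := by
              rw [Finset.sum_mul_sum]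
          _ = (r i₁ : ℂ) * ρ i₁ a b * ρ i₁ c d := by rw [hkey, hkey, mul_assoc]

theorem swap_not_mixed (n : ℕ) (hn : 2 ≤ n) :
    ¬ DoublyMixed n (fun a b c d =>
        (if a = d then (1 : ℂ) else 0) * (if b = c then (1 : ℂ) else 0)) := by
  rintro ⟨N, r, ρ, hr, hρ, hrep⟩
  set i0 : Fin n := ⟨0, by omega⟩ with hi0
  set i1 : Fin n := ⟨1, by omega⟩ with hi1
  have hne : i0 ≠ i1 := by simp [hi0, hi1, Fin.ext_iff]
  have h1 : (1 : ℂ) = ∑ k, (r k : ℂ) * ρ k i0 i1 * ρ k i1 i0 := by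
    simpa using hrep i0 i1 i1 i0
  have h0 : (0 : ℂ) = ∑ k, (r k : ℂ) * ρ k i0 i0 * ρ k i1 i1 := by
    simpa [hne] using hrep i0 i0 i1 i1
  have hrk : ∀ k, (0 : ℂ) ≤ (r k : ℂ) := by
    intro k; rw [Complex.zero_le_real]; exact hr k
  have hle : ∀ k, (r k : ℂ) * ρ k i0 i1 * ρ k i1 i0 ≤ (r k : ℂ) * ρ k i0 i0 * ρ k i1 i1 := by
    intro k
    set M : Matrix (Fin 2) (Fin 2) ℂ :=
      (ρ k).submatrix (fun t => if t = 0 then i0 else i1) (fun t => if t = 0 then i0 else i1)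
      with hM
    have hMps : M.PosSemidef := (hρ k).submatrix _
    have hdet : 0 ≤ M.det := by
      rw [hMps.1.det_eq_prod_eigenvalues]
      exact Finset.prod_nonneg fun i _ => RCLike.ofReal_nonneg.mpr (hMps.eigenvalues_nonneg i)
    have hdet2 : M.det = ρ k i0 i0 * ρ k i1 i1 - ρ k i0 i1 * ρ k i1 i0 := by
      rw [Matrix.det_fin_two]
      simp [hM, Matrix.submatrix_apply]
    have h2 : ρ k i0 i1 * ρ k i1 i0 ≤ ρ k i0 i0 * ρ k i1 i1 := by
      rw [hdet2] at hdet
      exact sub_nonneg.mp hdet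
    calc (r k : ℂ) * ρ k i0 i1 * ρ k i1 i0 = (r k : ℂ) * (ρ k i0 i1 * ρ k i1 i0) := by ring
      _ ≤ (r k : ℂ) * (ρ k i0 i0 * ρ k i1 i1) := mul_le_mul_of_nonneg_left h2 (hrk k)
      _ = (r k : ℂ) * ρ k i0 i0 * ρ k i1 i1 := by ring
  have habs : (1 : ℂ) ≤ 0 := by
    rw [h1, h0]
    exact Finset.sum_le_sum fun k _ => hle k
  rw [Complex.le_def] at habs
  norm_num at habs

theorem swap_dilated (n : ℕ) :
    DoublyDilated n (fun a b c d =>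
        (if a = d then (1 : ℂ) else 0) * (if b = c then (1 : ℂ) else 0)) := by
  refine ⟨1, n, fun a _ k => if a = k then 1 else 0, ?_⟩
  intro a b c d
  simp only [Finset.sum_const, Finset.card_univ, Fintype.card_fin, one_smul,
    Fin.sum_univ_one]
  simp [apply_ite (starRingEnd ℂ), ite_mul, mul_ite, Finset.sum_ite_eq, eq_comm]

theorem swap_tensor_dilated_not_mixed (n : ℕ) (hn : 2 ≤ n) :
    (DoublyDilated n (fun a b c d =>
        (if a = d then (1 : ℂ) else 0) * (if b = c then (1 : ℂ) else 0)) ∧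
      ¬ DoublyMixed n (fun a b c d =>
        (if a = d then (1 : ℂ) else 0) * (if b = c then (1 : ℂ) else 0))) ∧
    {Ψ : Fin n → Fin n → Fin n → Fin n → ℂ | DoublyMixed n Ψ} ⊂
      {Ψ | DoublyDilated n Ψ} := by
  refine ⟨⟨swap_dilated n, swap_not_mixed n hn⟩, ?_⟩
  rw [Set.ssubset_def]
  refine ⟨fun Ψ hΨ => mixed_imp_dilated hΨ, fun hsub => ?_⟩
  exact swap_not_mixed n hn (hsub (swap_dilated n))
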